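/- For every u ∈ N and every v ∈ V with P⁺v ≠ 0, the supremum β = sup{E₂(u,w) : w ∈ F_u(v)} is finite and strictly positive, and it is attained at some w₀ ∈ F_u(v) (necessarily with P⁺w₀ ≠ 0). -/

import Mathlib

open scoped InnerProductSpace
open Filter Topology

lemma weak_compact_aux
    {V : Type*} [NormedAddCommGroup V] [InnerProductSpace ℝ V] [CompleteSpace V]
    (w : ℕ → V) (M : ℝ) (hM : ∀ n, ‖w n‖ ≤ M) :
    ∃ (w₀ : V) (φ : ℕ → ℕ), StrictMono φ ∧
      ∀ y : V, Tendsto (fun n => ⟪w (φ n), y⟫_ℝ) atTop (𝓝 ⟪w₀, y⟫_ℝ) := by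
  classical
  have hM0 : 0 ≤ M := le_trans (norm_nonneg _) (hM 0)
  -- the closed span of the range
  set K : Submodule ℝ V := (Submodule.span ℝ (Set.range w)).topologicalClosure with hK
  have hKclosed : IsClosed (K : Set V) := Submodule.isClosed_topologicalClosure _
  haveI : CompleteSpace K := hKclosed.completeSpace_coe
  have hwK : ∀ n, w n ∈ K :=
    fun n => Submodule.le_topologicalClosure _ (Submodule.subset_span ⟨n, rfl⟩)
  -- separability: countable set whose closure contains K
  have hsep : TopologicalSpace.IsSeparable (K : Set V) :=
    (TopologicalSpace.IsSeparable.span ((Set.countable_range w).isSeparable)).closure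
  obtain ⟨c, hc_count, hc_sub⟩ := hsep
  obtain ⟨e, he⟩ : ∃ e : ℕ → V, insert (0:V) c = Set.range e :=
    (hc_count.insert 0).exists_eq_range (Set.insert_nonempty _ _)
  have hce : (K : Set V) ⊆ closure (Set.range e) := by
    rw [← he]
    exact hc_sub.trans (closure_mono (Set.subset_insert _ _))
  -- diagonal extraction via compactness of a countable product
  set C : Set (ℕ → ℝ) := Set.univ.pi (fun k => Set.Icc (-(M * ‖e k‖)) (M * ‖e k‖)) with hC
  have hCcomp : IsCompact C := isCompact_univ_pi (fun k => isCompact_Icc)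
  have hg : ∀ n, (fun k => ⟪w n, e k⟫_ℝ) ∈ C := by
    intro n
    intro k _
    have := abs_real_inner_le_norm (w n) (e k)
    have hb : |⟪w n, e k⟫_ℝ| ≤ M * ‖e k‖ :=
      this.trans (mul_le_mul_of_nonneg_right (hM n) (norm_nonneg _))
    exact abs_le.mp hb
  obtain ⟨L, _, φ, hφ, hconv⟩ := hCcomp.tendsto_subseq hg
  have hconv' : ∀ k, Tendsto (fun n => ⟪w (φ n), e k⟫_ℝ) atTop (𝓝 (L k)) := by
    intro k
    have := (continuous_apply k).continuousAt.tendsto.comp hconv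
    exact this
  -- convergence for every y
  have hcauchy : ∀ y : V, ∃ r : ℝ, Tendsto (fun n => ⟪w (φ n), y⟫_ℝ) atTop (𝓝 r) := by
    intro y
    set y' : V := (K.orthogonalProjectionOnto y : V) with hy'
    have hyy' : ∀ n, ⟪w (φ n), y⟫_ℝ = ⟪w (φ n), y'⟫_ℝ := by
      intro n
      have horth : ⟪w (φ n), y - y'⟫_ℝ = 0 := by
        exact (Submodule.sub_starProjection_mem_orthogonal (K := K) y) (w (φ n)) (hwK (φ n))
      have : ⟪w (φ n), y⟫_ℝ - ⟪w (φ n), y'⟫_ℝ = 0 := by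
        rw [← inner_sub_right]; exact horth
      linarith
    have hy'K : y' ∈ (K : Set V) := (K.orthogonalProjectionOnto y).2
    suffices h : CauchySeq (fun n => ⟪w (φ n), y'⟫_ℝ) by
      obtain ⟨r, hr⟩ := cauchySeq_tendsto_of_complete h
      exact ⟨r, by simpa only [hyy'] using hr⟩
    rw [Metric.cauchySeq_iff]
    intro ε hε
    have hM1 : (0:ℝ) < M + 1 := by linarith
    obtain ⟨z, hz_mem, hz_close⟩ := Metric.mem_closure_iff.mp (hce hy'K) (ε / (4 * (M + 1)))
      (by positivity)
    obtain ⟨k, hk⟩ := hz_mem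
    -- the sequence ⟪w (φ n), e k⟫ is Cauchy
    have hck : CauchySeq (fun n => ⟪w (φ n), e k⟫_ℝ) := (hconv' k).cauchySeq
    rw [Metric.cauchySeq_iff] at hck
    obtain ⟨N, hN⟩ := hck (ε / 2) (by positivity)
    refine ⟨N, fun m hm n hn => ?_⟩
    have key : ∀ j, |⟪w (φ j), y'⟫_ℝ - ⟪w (φ j), e k⟫_ℝ| ≤ (M+1) * (ε / (4 * (M + 1))) := by
      intro j
      rw [← inner_sub_right]
      refine (abs_real_inner_le_norm _ _).trans ?_
      have h1 : ‖w (φ j)‖ ≤ M + 1 := (hM _).trans (by linarith)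
      have h2 : ‖y' - e k‖ ≤ ε / (4 * (M + 1)) := by
        rw [← dist_eq_norm]
        rw [← hk] at hz_close
        exact le_of_lt hz_close
      exact mul_le_mul h1 h2 (norm_nonneg _) (by linarith)
    have hNd := hN m hm n hn
    rw [Real.dist_eq] at hNd ⊢
    have hfrac : (M+1) * (ε / (4 * (M + 1))) = ε / 4 := by
      field_simp
    have k1 := key m
    have k2 := key n
    rw [hfrac] at k1 k2
    have : |⟪w (φ m), y'⟫_ℝ - ⟪w (φ n), y'⟫_ℝ| ≤
        |⟪w (φ m), y'⟫_ℝ - ⟪w (φ m), e k⟫_ℝ| + |⟪w (φ m), e k⟫_ℝ - ⟪w (φ n), e k⟫_ℝ|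
          + |⟪w (φ n), e k⟫_ℝ - ⟪w (φ n), y'⟫_ℝ| := by
      have := abs_sub_le (⟪w (φ m), y'⟫_ℝ) (⟪w (φ m), e k⟫_ℝ) (⟪w (φ n), y'⟫_ℝ)
      have h2 := abs_sub_le (⟪w (φ m), e k⟫_ℝ) (⟪w (φ n), e k⟫_ℝ) (⟪w (φ n), y'⟫_ℝ)
      linarith
    have k3 : |⟪w (φ n), e k⟫_ℝ - ⟪w (φ n), y'⟫_ℝ| ≤ ε / 4 := by
      rw [abs_sub_comm]; exact k2
    linarith
  -- build the limit as a continuous linear functional, then apply Riesz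
  choose r hr using hcauchy
  have hr_add : ∀ y₁ y₂ : V, r (y₁ + y₂) = r y₁ + r y₂ := by
    intro y₁ y₂
    refine tendsto_nhds_unique (hr (y₁ + y₂)) ?_
    have := (hr y₁).add (hr y₂)
    simpa only [← inner_add_right] using this
  have hr_smul : ∀ (t : ℝ) (y : V), r (t • y) = t * r y := by
    intro t y
    refine tendsto_nhds_unique (hr (t • y)) ?_
    have := (hr y).const_mul t
    simpa only [← real_inner_smul_right] using this
  have hr_bound : ∀ y : V, |r y| ≤ M * ‖y‖ := by
    intro y
    have : Tendsto (fun n => |⟪w (φ n), y⟫_ℝ|) atTop (𝓝 |r y|) := (hr y).abs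
    refine le_of_tendsto this (Filter.Eventually.of_forall fun n => ?_)
    exact (abs_real_inner_le_norm _ _).trans
      (mul_le_mul_of_nonneg_right (hM _) (norm_nonneg _))
  let T : V →ₗ[ℝ] ℝ :=
    { toFun := r
      map_add' := hr_add
      map_smul' := hr_smul }
  let T' : V →L[ℝ] ℝ := LinearMap.mkContinuous T M (fun y => by
    simpa [T, Real.norm_eq_abs] using hr_bound y)
  refine ⟨(InnerProductSpace.toDual ℝ V).symm T', φ, hφ, fun y => ?_⟩
  have : ⟪(InnerProductSpace.toDual ℝ V).symm T', y⟫_ℝ = T' y :=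
    InnerProductSpace.toDual_symm_apply
  rw [this]
  exact hr y

set_option maxHeartbeats 1000000 in
theorem stmt_6
    {W : Type*} [NormedAddCommGroup W] [InnerProductSpace ℝ W] [CompleteSpace W]
    {V : Type*} [NormedAddCommGroup V] [InnerProductSpace ℝ V] [CompleteSpace V]
    (ι : V →L[ℝ] W) (hι : Function.Injective ι)
    (c : ℝ) (hc : 0 < c) (hιc : ∀ v : V, ‖ι v‖ ≤ c * ‖v‖)
    (Pp Pm : V →L[ℝ] V)
    (hP_sum : ∀ v : V, Pp v + Pm v = v)
    (hPp_idem : ∀ v : V, Pp (Pp v) = Pp v)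
    (hPm_idem : ∀ v : V, Pm (Pm v) = Pm v)
    (hP_orth : ∀ v w : V, ⟪Pp v, Pm w⟫_ℝ = 0)
    (a : V →L[ℝ] V →L[ℝ] ℝ)
    (ha : ∀ v w : V, a v w = ⟪Pp v, Pp w⟫_ℝ - ⟪Pm v, Pm w⟫_ℝ)
    {N : Type*} [NormedAddCommGroup N] [InnerProductSpace ℝ N] [CompleteSpace N]
    (p : ℝ) (hp : 1 < p)
    (b : N → V → ℝ) (f : N → ℝ → ℝ)
    (hb_C2 : ContDiff ℝ 2 (fun q : N × V => b q.1 q.2))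
    (hb_zero : ∀ u : N, b u 0 = 0)
    (hb_nonneg : ∀ (u : N) (v : V), 0 ≤ b u v)
    (hf_cont : ContinuousOn (fun q : N × ℝ => f q.1 q.2) (Set.univ ×ˢ Set.Ici (0:ℝ)))
    (hf_zero : ∀ u : N, f u 0 = 0)
    (hf_mono : ∀ u : N, StrictMonoOn (f u) (Set.Ici (0:ℝ)))
    (hf_nonneg : ∀ (u : N) (t : ℝ), 0 ≤ t → 0 ≤ f u t)
    (hgrad : ∀ (u : N) (v h : V), fderiv ℝ (b u) v h = f u ‖ι v‖ * ⟪ι v, ι h⟫_ℝ)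
    (hb_wcont : ∀ (u : N) (vseq : ℕ → V) (v : V),
      (∀ y : V, Tendsto (fun n => ⟪vseq n, y⟫_ℝ) atTop (𝓝 ⟪v, y⟫_ℝ)) →
      Tendsto (fun n => b u (vseq n)) atTop (𝓝 (b u v)))
    (hb_super : ∀ (u : N) (vseq : ℕ → V) (v : V), v ≠ 0 →
      (∀ y : V, Tendsto (fun n => ⟪vseq n, y⟫_ℝ) atTop (𝓝 ⟪v, y⟫_ℝ)) →
      ∀ s : ℕ → ℝ, Tendsto s atTop atTop →
      Tendsto (fun n => b u (s n • vseq n) / (s n) ^ 2) atTop atTop)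
    :
    ∀ (u : N) (v : V), Pp v ≠ 0 →
      ∃ w₀ : V,
        (∃ (t : ℝ) (w : V), 0 ≤ t ∧ Pm w = w ∧ w₀ = t • v + w) ∧
        Pp w₀ ≠ 0 ∧
        0 < (1/2 : ℝ) * a w₀ w₀ - b u w₀ ∧
        ∀ (t : ℝ) (w : V), 0 ≤ t → Pm w = w →
          (1/2 : ℝ) * a (t • v + w) (t • v + w) - b u (t • v + w) ≤
            (1/2 : ℝ) * a w₀ w₀ - b u w₀ := by
  intro u v hxne
  classical
  -- basic projection algebra
  have hPpPm : ∀ z : V, Pp (Pm z) = 0 := by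
    intro z
    have h := congrArg Pp (hP_sum z)
    rw [map_add, hPp_idem] at h
    have h' : Pp z + Pp (Pm z) = Pp z + 0 := by rw [add_zero]; exact h
    exact add_left_cancel h'
  have hPmPp : ∀ z : V, Pm (Pp z) = 0 := by
    intro z
    have h := congrArg Pm (hP_sum z)
    rw [map_add, hPm_idem] at h
    have h' : Pm (Pp z) + Pm z = 0 + Pm z := by rw [zero_add]; exact h
    exact add_right_cancel h'
  have hiPmPp : ∀ y z : V, ⟪Pm y, Pp z⟫_ℝ = 0 := by
    intro y z; rw [real_inner_comm]; exact hP_orth z y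
  have hiPp : ∀ y z : V, ⟪Pp y, z⟫_ℝ = ⟪Pp y, Pp z⟫_ℝ := by
    intro y z
    conv_lhs => rw [← hP_sum z]
    rw [inner_add_right, hP_orth, add_zero]
  have hiPm : ∀ y z : V, ⟪Pm y, z⟫_ℝ = ⟪Pm y, Pm z⟫_ℝ := by
    intro y z
    conv_lhs => rw [← hP_sum z]
    rw [inner_add_right, hiPmPp, zero_add]
  have hPp_sa : ∀ y z : V, ⟪Pp y, z⟫_ℝ = ⟪y, Pp z⟫_ℝ := by
    intro y z
    rw [hiPp y z]
    conv_rhs => rw [← hP_sum y]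
    rw [inner_add_left, hiPmPp, add_zero]
  have hPm_sa : ∀ y z : V, ⟪Pm y, z⟫_ℝ = ⟪y, Pm z⟫_ℝ := by
    intro y z
    rw [hiPm y z]
    conv_rhs => rw [← hP_sum y]
    rw [inner_add_left, hP_orth, zero_add]
  set x : V := Pp v with hxdef
  set E : V → ℝ := fun ww => (1/2 : ℝ) * a ww ww - b u ww with hEdef
  have hEform : ∀ ww : V, E ww = 1/2*‖Pp ww‖^2 - 1/2*‖Pm ww‖^2 - b u ww := by
    intro ww
    show (1/2 : ℝ) * a ww ww - b u ww = _
    rw [ha, real_inner_self_eq_norm_sq, real_inner_self_eq_norm_sq]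
    ring
  have hPpz : ∀ z : V, Pm z = z → Pp z = 0 := by
    intro z hz; rw [← hz]; exact hPpPm z
  have hPpF : ∀ (t : ℝ) (z : V), Pm z = z → Pp (t • v + z) = t • x := by
    intro t z hz
    rw [map_add, map_smul, hPpz z hz, add_zero, hxdef]
  have hPmF : ∀ (t : ℝ) (z : V), Pm z = z → Pm (t • v + z) = t • Pm v + z := by
    intro t z hz
    rw [map_add, map_smul]
    conv_lhs => rw [hz]
  have hnormPpF : ∀ (t : ℝ) (z : V), 0 ≤ t → Pm z = z → ‖Pp (t • v + z)‖ = t * ‖x‖ := by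
    intro t z ht hz
    rw [hPpF t z hz, norm_smul, Real.norm_eq_abs, abs_of_nonneg ht]
  have hEF : ∀ (t : ℝ) (z : V), 0 ≤ t → Pm z = z →
      E (t • v + z) = 1/2*(t^2*‖x‖^2) - 1/2*‖Pm (t • v + z)‖^2 - b u (t • v + z) := by
    intro t z ht hz
    rw [hEform, hnormPpF t z ht hz]
    ring
  have hEub : ∀ ww : V, E ww ≤ 1/2*‖Pp ww‖^2 := by
    intro ww
    rw [hEform]
    have := hb_nonneg u ww
    nlinarith [sq_nonneg ‖Pm ww‖]
  -- strict positivity: find a point with positive energy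
  clear_value E
  have hxpos : 0 < ‖x‖ := norm_pos_iff.mpr hxne
  have hιx : 0 < ‖ι x‖ := by
    rw [norm_pos_iff]
    intro h
    exact hxne (hι (by rw [h, map_zero]))
  -- differentiability of b u
  have hbu_diff : Differentiable ℝ (b u) := by
    have h1 : ContDiff ℝ 2 (fun w : V => b u w) :=
      hb_C2.comp ((contDiff_const (c := u)).prodMk contDiff_id)
    exact h1.differentiable (by norm_num)
  have hg : ∀ (x' : V) (s : ℝ), HasDerivAt (fun s : ℝ => b u (s • x'))
      (f u ‖ι (s • x')‖ * ⟪ι (s • x'), ι x'⟫_ℝ) s := by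
    intro x' s
    have h1 : HasFDerivAt (b u) (fderiv ℝ (b u) (s • x')) (s • x') :=
      (hbu_diff (s • x')).hasFDerivAt
    have h2 : HasDerivAt (fun s : ℝ => s • x') x' s := by
      simpa using (hasDerivAt_id s).smul_const x'
    have h3 := h1.comp_hasDerivAt s h2
    simpa [hgrad, Function.comp_def] using h3
  have hb_small : ∀ ε : ℝ, 0 ≤ ε → b u (ε • x) ≤ f u (ε * ‖ι x‖) * (ε^2 * ‖ι x‖^2) := by
    intro ε hε
    set C : ℝ := f u (ε * ‖ι x‖) * (ε * ‖ι x‖^2) with hC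
    have hfderiv : ∀ s ∈ Set.Icc (0:ℝ) ε, HasDerivWithinAt (fun s : ℝ => b u (s • x))
        (f u (s * ‖ι x‖) * (s * ‖ι x‖^2)) (Set.Icc 0 ε) s := by
      intro s hs
      have h := (hg x s).hasDerivWithinAt (s := Set.Icc 0 ε)
      have e1 : ‖ι (s • x)‖ = s * ‖ι x‖ := by
        rw [map_smul, norm_smul, Real.norm_eq_abs, abs_of_nonneg hs.1]
      have e2 : ⟪ι (s • x), ι x⟫_ℝ = s * ‖ι x‖^2 := by
        rw [map_smul, real_inner_smul_left, real_inner_self_eq_norm_sq]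
      rw [e1, e2] at h
      exact h
    have hbound : ∀ s ∈ Set.Ico (0:ℝ) ε, ‖f u (s * ‖ι x‖) * (s * ‖ι x‖^2)‖ ≤ C := by
      intro s hs
      have h0 : 0 ≤ s * ‖ι x‖ := mul_nonneg hs.1 (norm_nonneg _)
      have h0' : 0 ≤ ε * ‖ι x‖ := mul_nonneg hε (norm_nonneg _)
      have hmono := (hf_mono u).monotoneOn (a := s * ‖ι x‖) (b := ε * ‖ι x‖) h0 h0'
        (mul_le_mul_of_nonneg_right hs.2.le (norm_nonneg _))
      have hfn : 0 ≤ f u (s * ‖ι x‖) := hf_nonneg u _ h0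
      rw [Real.norm_eq_abs, abs_of_nonneg (mul_nonneg hfn (mul_nonneg hs.1 (sq_nonneg _)))]
      apply mul_le_mul hmono (mul_le_mul_of_nonneg_right hs.2.le (sq_nonneg _))
        (mul_nonneg hs.1 (sq_nonneg _)) (hf_nonneg u _ h0')
    have hkey := norm_image_sub_le_of_norm_deriv_le_segment' hfderiv hbound ε
      (Set.right_mem_Icc.mpr hε)
    have hg0 : b u ((0:ℝ) • x) = 0 := by rw [zero_smul]; exact hb_zero u
    rw [hg0, sub_zero, Real.norm_eq_abs, abs_of_nonneg (hb_nonneg u _)] at hkey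
    calc b u (ε • x) ≤ C * (ε - 0) := hkey
      _ = f u (ε * ‖ι x‖) * (ε^2 * ‖ι x‖^2) := by rw [hC]; ring
  -- pick a small ε
  have hfc : Tendsto (fun t => f u t) (𝓝[Set.Ici (0:ℝ)] 0) (𝓝 0) := by
    have h1 : ContinuousWithinAt (fun q : N × ℝ => f q.1 q.2)
        (Set.univ ×ˢ Set.Ici (0:ℝ)) (u, 0) := hf_cont (u, 0) (by simp)
    have h2 : ContinuousWithinAt (fun t : ℝ => ((u, t) : N × ℝ)) (Set.Ici (0:ℝ)) 0 :=
      (continuous_const.prodMk continuous_id).continuousWithinAt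
    have h3 := h1.comp h2 (fun t ht => ⟨Set.mem_univ _, ht⟩)
    have h4 : f u 0 = 0 := hf_zero u
    simpa [ContinuousWithinAt, Function.comp_def, h4] using h3
  set D : ℝ := ‖x‖^2 / (4 * ‖ι x‖^2) with hD
  have hDpos : 0 < D := by positivity
  have hev : {t : ℝ | f u t < D} ∈ 𝓝[Set.Ici (0:ℝ)] 0 := hfc (Iio_mem_nhds hDpos)
  rw [Metric.mem_nhdsWithin_iff] at hev
  obtain ⟨δ, hδ, hball⟩ := hev
  set ε : ℝ := δ / (2 * (‖ι x‖ + 1)) with hεdef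
  have hε : 0 < ε := by positivity
  have hfεD : f u (ε * ‖ι x‖) < D := by
    apply hball
    constructor
    · rw [Metric.mem_ball, Real.dist_eq, sub_zero, abs_of_nonneg (by positivity)]
      rw [hεdef]
      rw [div_mul_eq_mul_div, div_lt_iff₀ (by positivity)]
      nlinarith [norm_nonneg (ι x)]
    · exact Set.mem_Ici.mpr (by positivity)
  set w₁ : V := ε • x with hw₁
  have hw₁F : w₁ = ε • v + (-(ε • Pm v)) := by
    rw [hw₁, hxdef]
    have hx' : Pp v = v - Pm v := by
      rw [eq_sub_iff_add_eq]; exact hP_sum v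
    rw [hx', smul_sub]
    abel
  have hPmw₁ : Pm (-(ε • Pm v)) = -(ε • Pm v) := by
    rw [map_neg, map_smul, hPm_idem]
  have hEw₁ : 0 < E w₁ := by
    have hb1 : b u (ε • x) ≤ f u (ε * ‖ι x‖) * (ε^2 * ‖ι x‖^2) := hb_small ε hε.le
    have hb2 : f u (ε * ‖ι x‖) * (ε^2 * ‖ι x‖^2) < D * (ε^2 * ‖ι x‖^2) := by
      apply mul_lt_mul_of_pos_right hfεD (by positivity)
    have hb3 : D * (ε^2 * ‖ι x‖^2) = ε^2 * ‖x‖^2 / 4 := by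
      rw [hD]
      field_simp
    have hPpw₁ : Pp w₁ = ε • x := by
      rw [hw₁, map_smul, hxdef, hPp_idem]
    have hPmw₁' : Pm w₁ = 0 := by
      rw [hw₁, map_smul, hxdef, hPmPp, smul_zero]
    rw [hEform, hPpw₁, hPmw₁', norm_zero, norm_smul, Real.norm_eq_abs, abs_of_nonneg hε.le]
    have : b u w₁ < ε^2 * ‖x‖^2 / 4 := by rw [hw₁]; linarith
    nlinarith [this]
  -- bound on the parameter t on the superlevel set
  have hT : ∃ T : ℝ, ∀ (t : ℝ) (z : V), 0 ≤ t → Pm z = z → 0 ≤ E (t • v + z) → t ≤ T := by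
    by_contra hcon
    push_neg at hcon
    choose t z ht0 hz hE0 hgt using fun n : ℕ => hcon ((n:ℝ) + 1)
    have htpos : ∀ n, 0 < t n := fun n => lt_of_le_of_lt (by positivity) (hgt n)
    set vs : ℕ → V := fun n => v + (t n)⁻¹ • z n with hvs
    have hsmul : ∀ n, t n • vs n = t n • v + z n := by
      intro n
      rw [hvs]
      simp only [smul_add, smul_smul, mul_inv_cancel₀ (htpos _).ne', one_smul]
    have hPmvs : ∀ n, Pm (vs n) = (t n)⁻¹ • Pm (t n • v + z n) := by
      intro n
      rw [hPmF _ _ (hz n), smul_add, smul_smul, inv_mul_cancel₀ (htpos _).ne', one_smul]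
      show Pm (v + (t n)⁻¹ • z n) = _
      rw [map_add, map_smul, hz n]
    have hbE : ∀ n, b u (t n • v + z n) ≤ 1/2 * ((t n)^2 * ‖x‖^2) ∧
        ‖Pm (t n • v + z n)‖ ≤ t n * ‖x‖ := by
      intro n
      have h := hE0 n
      rw [hEF _ _ (ht0 n) (hz n)] at h
      have hb := hb_nonneg u (t n • v + z n)
      constructor
      · nlinarith [sq_nonneg ‖Pm (t n • v + z n)‖]
      · nlinarith [norm_nonneg (Pm (t n • v + z n)), mul_nonneg (ht0 n) (norm_nonneg x)]
    have hvsb : ∀ n, ‖vs n‖ ≤ 2 * ‖x‖ := by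
      intro n
      have h1 : vs n = Pp (vs n) + Pm (vs n) := (hP_sum (vs n)).symm
      have h2 : Pp (vs n) = x := by
        rw [hvs, map_add, map_smul, hPpz _ (hz n), smul_zero, add_zero]
      have h3 : ‖Pm (vs n)‖ ≤ ‖x‖ := by
        rw [hPmvs n, norm_smul, Real.norm_eq_abs, abs_of_nonneg (inv_nonneg.mpr (ht0 n))]
        calc (t n)⁻¹ * ‖Pm (t n • v + z n)‖ ≤ (t n)⁻¹ * (t n * ‖x‖) := by
              apply mul_le_mul_of_nonneg_left (hbE n).2 (inv_nonneg.mpr (ht0 n))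
          _ = ‖x‖ := by rw [inv_mul_cancel_left₀ (htpos n).ne']
      calc ‖vs n‖ = ‖Pp (vs n) + Pm (vs n)‖ := by rw [← h1]
        _ ≤ ‖Pp (vs n)‖ + ‖Pm (vs n)‖ := norm_add_le _ _
        _ ≤ ‖x‖ + ‖x‖ := by rw [h2]; exact add_le_add le_rfl h3
        _ = 2 * ‖x‖ := by ring
    obtain ⟨vt, φ, hφ, hwconv⟩ := weak_compact_aux vs (2 * ‖x‖) hvsb
    have hPpvt : Pp vt = x := by
      apply ext_inner_right ℝ
      intro y
      rw [hPp_sa]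
      have h1 := hwconv (Pp y)
      have h2 : ∀ n, ⟪vs (φ n), Pp y⟫_ℝ = ⟪x, y⟫_ℝ := by
        intro n
        rw [← hPp_sa]
        have : Pp (vs (φ n)) = x := by
          rw [hvs, map_add, map_smul, hPpz _ (hz (φ n)), smul_zero, add_zero]
        rw [this]
      have h3 : Tendsto (fun n => ⟪vs (φ n), Pp y⟫_ℝ) atTop (𝓝 ⟪x, y⟫_ℝ) := by
        simp only [h2]
        exact tendsto_const_nhds
      exact tendsto_nhds_unique h1 h3
    have hvtne : vt ≠ 0 := by
      intro h
      rw [h, map_zero] at hPpvt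
      exact hxne hPpvt.symm
    have htφ : Tendsto (fun n => t (φ n)) atTop atTop := by
      apply tendsto_atTop_mono (fun n => (hgt (φ n)).le.trans' ?_)
      · exact tendsto_atTop_add_const_right atTop 1 tendsto_natCast_atTop_atTop
      · have : (n:ℝ) ≤ (φ n : ℝ) := by exact_mod_cast hφ.le_apply
        linarith
    have hsup := hb_super u (fun n => vs (φ n)) vt hvtne hwconv (fun n => t (φ n)) htφ
    obtain ⟨n, hn⟩ := (hsup.eventually_gt_atTop (1/2 * ‖x‖^2)).exists
    rw [hsmul (φ n)] at hn
    have hle : b u (t (φ n) • v + z (φ n)) / (t (φ n))^2 ≤ 1/2 * ‖x‖^2 := by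
      rw [div_le_iff₀ (pow_pos (htpos _) 2)]
      have := (hbE (φ n)).1
      nlinarith
    linarith
  obtain ⟨T₀, hT₀⟩ := hT
  set T : ℝ := max T₀ 0 with hTdef
  have hTn : ∀ (t : ℝ) (z : V), 0 ≤ t → Pm z = z → 0 ≤ E (t • v + z) → t ≤ T :=
    fun t z ht hz hE => (hT₀ t z ht hz hE).trans (le_max_left _ _)
  have hT0 : 0 ≤ T := le_max_right _ _
  -- the supremum
  set S : Set ℝ := {r | ∃ (t : ℝ) (z : V), 0 ≤ t ∧ Pm z = z ∧ r = E (t • v + z)} with hS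
  have hSne : S.Nonempty := ⟨E w₁, ε, -(ε • Pm v), hε.le, hPmw₁, by rw [← hw₁F]⟩
  have hSbdd : BddAbove S := by
    refine ⟨1/2 * (T^2 * ‖x‖^2), fun r hr => ?_⟩
    obtain ⟨t, z, ht, hz, rfl⟩ := hr
    by_cases h0 : 0 ≤ E (t • v + z)
    · have htT := hTn t z ht hz h0
      have := hEub (t • v + z)
      rw [hnormPpF t z ht hz] at this
      nlinarith [mul_le_mul_of_nonneg_right (mul_self_le_mul_self ht htT) (sq_nonneg ‖x‖)]
    · push_neg at h0
      nlinarith [sq_nonneg (T * ‖x‖)]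
  set β : ℝ := sSup S with hβ
  have hβ₁ : E w₁ ≤ β := le_csSup hSbdd ⟨ε, -(ε • Pm v), hε.le, hPmw₁, by rw [← hw₁F]⟩
  have hβpos : 0 < β := lt_of_lt_of_le hEw₁ hβ₁
  -- maximizing sequence
  have hmax : ∀ n : ℕ, ∃ r ∈ S, β - E w₁ / ((n:ℝ)+1) < r := by
    intro n
    apply exists_lt_of_lt_csSup hSne
    have : 0 < E w₁ / ((n:ℝ)+1) := by positivity
    linarith
  choose rs hrsS hrs using hmax
  have hrsS' : ∀ n : ℕ, ∃ (t : ℝ) (z : V), 0 ≤ t ∧ Pm z = z ∧ rs n = E (t • v + z) :=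
    fun n => hrsS n
  choose ts zs hts hzs hrw using hrsS'
  set ws : ℕ → V := fun n => ts n • v + zs n with hws
  have hEws_le : ∀ n, E (ws n) ≤ β := by
    intro n
    exact le_csSup hSbdd ⟨ts n, zs n, hts n, hzs n, rfl⟩
  have hEws_ge : ∀ n : ℕ, β - E w₁ / ((n:ℝ)+1) ≤ E (ws n) := by
    intro n
    have := hrs n
    rw [hrw n] at this
    exact this.le
  have hEws0 : ∀ n, 0 ≤ E (ws n) := by
    intro n
    have h1 := hEws_ge n
    have h2 : E w₁ / ((n:ℝ)+1) ≤ E w₁ := by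
      rw [div_le_iff₀ (by positivity)]
      nlinarith [hEw₁, Nat.cast_nonneg (α := ℝ) n]
    linarith [hβ₁]
  have hEconv : Tendsto (fun n => E (ws n)) atTop (𝓝 β) := by
    have hlow : Tendsto (fun n : ℕ => β - E w₁ / ((n:ℝ)+1)) atTop (𝓝 β) := by
      have h1 : Tendsto (fun n : ℕ => E w₁ * (1 / ((n:ℝ)+1))) atTop (𝓝 (E w₁ * 0)) :=
        tendsto_one_div_add_atTop_nhds_zero_nat.const_mul (E w₁)
      have h2 := (tendsto_const_nhds (x := β) (f := (atTop : Filter ℕ))).sub h1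
      simp only [mul_one_div, mul_zero, sub_zero] at h2
      exact h2
    exact tendsto_of_tendsto_of_tendsto_of_le_of_le hlow tendsto_const_nhds
      hEws_ge hEws_le
  have htsT : ∀ n, ts n ≤ T := fun n => hTn _ _ (hts n) (hzs n) (hEws0 n)
  have hwsb : ∀ n, ‖ws n‖ ≤ 2 * (T * ‖x‖) := by
    intro n
    have h0 := hEws0 n
    rw [hEF _ _ (hts n) (hzs n)] at h0
    have hb := hb_nonneg u (ws n)
    rw [hws] at hb
    have hPm_le : ‖Pm (ws n)‖ ≤ ts n * ‖x‖ := by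
      rw [hws]
      nlinarith [norm_nonneg (Pm (ts n • v + zs n)), mul_nonneg (hts n) (norm_nonneg x)]
    have hPp_eq : ‖Pp (ws n)‖ = ts n * ‖x‖ := by
      rw [hws]; exact hnormPpF _ _ (hts n) (hzs n)
    have h1 : ws n = Pp (ws n) + Pm (ws n) := (hP_sum (ws n)).symm
    have h2 : ts n * ‖x‖ ≤ T * ‖x‖ := mul_le_mul_of_nonneg_right (htsT n) (norm_nonneg _)
    calc ‖ws n‖ = ‖Pp (ws n) + Pm (ws n)‖ := by rw [← h1]
      _ ≤ ‖Pp (ws n)‖ + ‖Pm (ws n)‖ := norm_add_le _ _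
      _ ≤ T * ‖x‖ + T * ‖x‖ := by
          rw [hPp_eq]
          exact add_le_add h2 (hPm_le.trans h2)
      _ = 2 * (T * ‖x‖) := by ring
  -- extract convergent subsequence for t
  obtain ⟨tst, htstmem, φ₁, hφ₁, htconv⟩ :=
    (isCompact_Icc (a := (0:ℝ)) (b := T)).tendsto_subseq
      (x := ts) (fun n => Set.mem_Icc.mpr ⟨hts n, htsT n⟩)
  -- extract weakly convergent subsequence
  obtain ⟨w₀, φ₂, hφ₂, hwconv⟩ :=
    weak_compact_aux (fun n => ws (φ₁ n)) (2 * (T * ‖x‖)) (fun n => hwsb (φ₁ n))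
  set ψ : ℕ → ℕ := fun n => φ₁ (φ₂ n) with hψ
  have hwc : ∀ y : V, Tendsto (fun n => ⟪ws (ψ n), y⟫_ℝ) atTop (𝓝 ⟪w₀, y⟫_ℝ) :=
    fun y => hwconv y
  have htc : Tendsto (fun n => ts (ψ n)) atTop (𝓝 tst) :=
    htconv.comp hφ₂.tendsto_atTop
  have hEc : Tendsto (fun n => E (ws (ψ n))) atTop (𝓝 β) :=
    hEconv.comp (hφ₁.comp hφ₂).tendsto_atTop
  have hbc : Tendsto (fun n => b u (ws (ψ n))) atTop (𝓝 (b u w₀)) :=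
    hb_wcont u (fun n => ws (ψ n)) w₀ hwc
  have htst0 : 0 ≤ tst := htstmem.1
  set zst : V := w₀ - tst • v with hzst
  have hw₀eq : w₀ = tst • v + zst := by rw [hzst]; abel
  have hPpzst : Pp zst = 0 := by
    apply ext_inner_right ℝ
    intro y
    rw [hPp_sa]
    have h1 : Tendsto (fun n => ⟪ws (ψ n) - ts (ψ n) • v, Pp y⟫_ℝ) atTop
        (𝓝 (⟪w₀, Pp y⟫_ℝ - tst * ⟪v, Pp y⟫_ℝ)) := by
      have h2 := (hwc (Pp y)).sub (htc.mul_const (⟪v, Pp y⟫_ℝ))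
      simp only [inner_sub_left, real_inner_smul_left] at h2 ⊢
      exact h2
    have h3 : ∀ n, ⟪ws (ψ n) - ts (ψ n) • v, Pp y⟫_ℝ = 0 := by
      intro n
      have : ws (ψ n) - ts (ψ n) • v = zs (ψ n) := by
        have e : ws (ψ n) = ts (ψ n) • v + zs (ψ n) := rfl
        rw [e, add_sub_cancel_left]
      rw [this, ← hPp_sa, hPpz _ (hzs (ψ n)), inner_zero_left]
    have h4 : Tendsto (fun n => ⟪ws (ψ n) - ts (ψ n) • v, Pp y⟫_ℝ) atTop (𝓝 0) := by
      simp only [h3]; exact tendsto_const_nhds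
    have h5 := tendsto_nhds_unique h1 h4
    have h6 : ⟪zst, Pp y⟫_ℝ = ⟪w₀, Pp y⟫_ℝ - tst * ⟪v, Pp y⟫_ℝ := by
      rw [hzst, inner_sub_left, real_inner_smul_left]
    rw [h6, h5, inner_zero_left]
  have hPmzst : Pm zst = zst := by
    have := hP_sum zst
    rw [hPpzst, zero_add] at this
    exact this
  -- weak lower semicontinuity of the negative part
  have hPm_wlim : Tendsto (fun n => ⟪Pm (ws (ψ n)), Pm w₀⟫_ℝ) atTop (𝓝 (‖Pm w₀‖^2)) := by
    have h1 := hwc (Pm w₀)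
    have h2 : ∀ n, ⟪Pm (ws (ψ n)), Pm w₀⟫_ℝ = ⟪ws (ψ n), Pm w₀⟫_ℝ := by
      intro n
      rw [hPm_sa, hPm_idem]
    have h3 : ⟪w₀, Pm w₀⟫_ℝ = ‖Pm w₀‖^2 := by
      rw [real_inner_comm, hiPm, real_inner_self_eq_norm_sq]
    simp only [h2]
    rw [← h3]
    exact h1
  have hβle : β ≤ E w₀ := by
    have hineq : ∀ n, ⟪Pm (ws (ψ n)), Pm w₀⟫_ℝ - 1/2*‖Pm w₀‖^2 ≤
        1/2*((ts (ψ n))^2*‖x‖^2) - b u (ws (ψ n)) - E (ws (ψ n)) := by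
      intro n
      have hEn := hEF (ts (ψ n)) (zs (ψ n)) (hts _) (hzs _)
      have hwsn : ws (ψ n) = ts (ψ n) • v + zs (ψ n) := rfl
      rw [← hwsn] at hEn
      have hCS : |⟪Pm (ws (ψ n)), Pm w₀⟫_ℝ| ≤ ‖Pm (ws (ψ n))‖ * ‖Pm w₀‖ :=
        abs_real_inner_le_norm _ _
      have := abs_le.mp hCS
      nlinarith [sq_nonneg (‖Pm (ws (ψ n))‖ - ‖Pm w₀‖)]
    have hlhs : Tendsto (fun n => ⟪Pm (ws (ψ n)), Pm w₀⟫_ℝ - 1/2*‖Pm w₀‖^2) atTop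
        (𝓝 (1/2*‖Pm w₀‖^2)) := by
      have := hPm_wlim.sub (tendsto_const_nhds (x := 1/2*‖Pm w₀‖^2) (f := atTop (α := ℕ)))
      have heq : ‖Pm w₀‖^2 - 1/2*‖Pm w₀‖^2 = 1/2*‖Pm w₀‖^2 := by ring
      rw [heq] at this
      exact this
    have hrhs : Tendsto (fun n => 1/2*((ts (ψ n))^2*‖x‖^2) - b u (ws (ψ n)) - E (ws (ψ n)))
        atTop (𝓝 (1/2*(tst^2*‖x‖^2) - b u w₀ - β)) := by
      have h1 : Tendsto (fun n => 1/2*((ts (ψ n))^2*‖x‖^2)) atTop (𝓝 (1/2*(tst^2*‖x‖^2))) := by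
        have := ((htc.mul htc).mul_const (‖x‖^2)).const_mul (1/2 : ℝ)
        convert this using 2 with n
        · ring
        · ring
      exact (h1.sub hbc).sub hEc
    have hfin := le_of_tendsto_of_tendsto' hlhs hrhs hineq
    have hEw₀ : E w₀ = 1/2*(tst^2*‖x‖^2) - 1/2*‖Pm w₀‖^2 - b u w₀ := by
      conv_lhs => rw [hw₀eq]
      rw [hEF tst zst htst0 hPmzst, ← hw₀eq]
    rw [hEw₀]
    linarith [hfin]
  have hEw₀pos : 0 < E w₀ := lt_of_lt_of_le hEw₁ (hβ₁.trans hβle)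
  refine ⟨w₀, ⟨tst, zst, htst0, hPmzst, hw₀eq⟩, ?_, ?_, ?_⟩
  · intro h
    have := hEub w₀
    rw [h, norm_zero] at this
    nlinarith
  · have h := hEw₀pos
    simp only [hEdef] at h
    exact h
  · intro t z ht hz
    have hmem : E (t • v + z) ∈ S := ⟨t, z, ht, hz, rfl⟩
    have h : E (t • v + z) ≤ E w₀ := (le_csSup hSbdd hmem).trans hβle
    simp only [hEdef] at h
    exact h
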